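/- arXiv:1805.05255 — 3 statements merged into one kernel-verified Lean document; each statement's English description precedes it below -/
import Mathlib

section
/- For every n ≥ 1 and every partition μ of n (written with parts μ_1 ≥ … ≥ μ_n ≥ 0 padded with zeros to length n), the alternant satisfies A_μ = (−1)^{n(n−1)/2} · V · det M in ℤ[x_1,…,x_n], where M is the n×n matrix whose (i,j) entry (1 ≤ i,j ≤ n) is the complete homogeneous symmetric polynomial h_{μ_j + n − j − i + 1} in x_1,…,x_n. -/
open MvPolynomial

/-- The parts of a partition of `n`, sorted into decreasing order and padded with
zeros to a sequence of length `n`: `paddedPart n μ i` is `μ_{i+1}`. -/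
def paddedPart (n : ℕ) (μ : Nat.Partition n) (i : Fin n) : ℕ :=
  ((μ.parts.sort (· ≤ ·)).reverse).getD i 0

/-- The Vandermonde product `∏_{i<j} (x_i - x_j)` in `ℤ[x_1, …, x_n]`. -/
noncomputable def vandermondeProd (n : ℕ) : MvPolynomial (Fin n) ℤ :=
  ∏ p ∈ Finset.univ.filter (fun p : Fin n × Fin n => p.1 < p.2), (X p.1 - X p.2)

/-- The alternant `A_μ = Σ_{σ ∈ S_n} sgn(σ) ∏_i x_{σ(i)}^{μ_i + n - i}` (with `i` running
from `1` to `n`), in `ℤ[x_1, …, x_n]`. -/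
noncomputable def alternant (n : ℕ) (μ : Nat.Partition n) : MvPolynomial (Fin n) ℤ :=
  ∑ σ : Equiv.Perm (Fin n),
    (Equiv.Perm.sign σ : ℤ) • ∏ i : Fin n, X (σ i) ^ (paddedPart n μ i + (n - 1 - (i : ℕ)))

/-- `λ` is strictly greater than `μ` in the lexicographic order on partitions of `n`
(compared through their padded decreasing part sequences). -/
def LexGT (n : ℕ) (l μ : Nat.Partition n) : Prop :=
  ∃ k : Fin n, (∀ j : Fin n, j < k → paddedPart n l j = paddedPart n μ j) ∧
    paddedPart n μ k < paddedPart n l k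

/-- The complete homogeneous symmetric polynomial `h_k` in `ℤ[x_1, …, x_n]`, indexed by an
integer `k`, with the conventions `h_0 = 1` and `h_k = 0` for `k < 0`. -/
noncomputable def hInt (n : ℕ) (k : ℤ) : MvPolynomial (Fin n) ℤ :=
  if 0 ≤ k then hsymm (Fin n) ℤ k.toNat else 0

namespace JT

open Finset

variable {n : ℕ}

noncomputable def hS (n : ℕ) (s : Finset (Fin n)) (m : ℕ) : MvPolynomial (Fin n) ℤ :=
  ∑ μ ∈ s.sym m, (μ.1.map X).prod

noncomputable def eS (n : ℕ) (s : Finset (Fin n)) (k : ℕ) : MvPolynomial (Fin n) ℤ :=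
  ∑ t ∈ s.powersetCard k, ∏ a ∈ t, X a

noncomputable def hZ (n : ℕ) (s : Finset (Fin n)) (z : ℤ) : MvPolynomial (Fin n) ℤ :=
  if 0 ≤ z then hS n s z.toNat else 0

noncomputable def eZ (n : ℕ) (s : Finset (Fin n)) (z : ℤ) : MvPolynomial (Fin n) ℤ :=
  if 0 ≤ z then eS n s z.toNat else 0

lemma hS_zero (s : Finset (Fin n)) : hS n s 0 = 1 := by
  simp only [hS, Finset.sym_zero, Finset.sum_singleton]
  rfl

lemma hS_empty (m : ℕ) (hm : m ≠ 0) : hS n (∅ : Finset (Fin n)) m = 0 := by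
  obtain ⟨m, rfl⟩ := Nat.exists_eq_succ_of_ne_zero hm
  simp [hS]

lemma sym_insert_split {a : Fin n} {s : Finset (Fin n)} (ha : a ∉ s) (m : ℕ) :
    (insert a s).sym (m + 1) =
      ((insert a s).sym m).image (Sym.cons a) ∪ s.sym (m + 1) := by
  ext μ
  simp only [mem_union, mem_image, Finset.mem_sym_iff]
  constructor
  · intro h
    by_cases hm : a ∈ μ
    · obtain ⟨τ, rfl⟩ := Sym.exists_cons_of_mem hm
      left
      refine ⟨τ, fun b hb => h b (Sym.mem_cons_of_mem hb), rfl⟩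
    · right
      intro b hb
      rcases Finset.mem_insert.1 (h b hb) with rfl | hbs
      · exact absurd hb hm
      · exact hbs
  · rintro (⟨τ, hτ, rfl⟩ | h)
    · intro b hb
      rcases Sym.mem_cons.1 hb with rfl | hb
      · exact mem_insert_self _ _
      · exact hτ b hb
    · exact fun b hb => mem_insert_of_mem (h b hb)


lemma hS_insert {a : Fin n} {s : Finset (Fin n)} (ha : a ∉ s) (m : ℕ) :
    hS n (insert a s) (m + 1) = X a * hS n (insert a s) m + hS n s (m + 1) := by
  have hdisj : Disjoint (((insert a s).sym m).image (Sym.cons a)) (s.sym (m + 1)) := by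
    rw [Finset.disjoint_left]
    rintro μ hμ hμ'
    obtain ⟨τ, _, rfl⟩ := Finset.mem_image.1 hμ
    exact ha (Finset.mem_sym_iff.1 hμ' a (Sym.mem_cons_self a τ))
  rw [hS, sym_insert_split ha m, Finset.sum_union hdisj]
  congr 1
  · rw [Finset.sum_image (fun τ _ τ' _ h => (Sym.cons_inj_right a τ τ').1 h), hS,
      Finset.mul_sum]
    apply Finset.sum_congr rfl
    intro τ _
    rw [Sym.cons, Multiset.map_cons, Multiset.prod_cons]

lemma hZ_neg {s : Finset (Fin n)} {z : ℤ} (hz : z < 0) : hZ n s z = 0 := by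
  rw [hZ, if_neg (by omega)]

lemma hZ_zero (s : Finset (Fin n)) : hZ n s 0 = 1 := by
  rw [hZ, if_pos le_rfl]
  exact hS_zero s

lemma hZ_empty {z : ℤ} (hz : 1 ≤ z) : hZ n (∅ : Finset (Fin n)) z = 0 := by
  rw [hZ, if_pos (by omega)]
  exact hS_empty _ (by omega)

lemma hZ_insert {a : Fin n} {s : Finset (Fin n)} (ha : a ∉ s) (z : ℤ) :
    hZ n (insert a s) z = X a * hZ n (insert a s) (z - 1) + hZ n s z := by
  rcases lt_trichotomy z 0 with hz | rfl | hz
  · rw [hZ_neg hz, hZ_neg hz, hZ_neg (by omega), mul_zero, add_zero]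
  · rw [hZ_zero, hZ_zero, hZ_neg (by omega), mul_zero, zero_add]
  · obtain ⟨m, rfl⟩ : ∃ m : ℕ, z = (m : ℤ) + 1 := ⟨(z - 1).toNat, by omega⟩
    have h1 : ((m : ℤ) + 1).toNat = m + 1 := by omega
    have h2 : ((m : ℤ) + 1 - 1).toNat = m := by omega
    rw [hZ, hZ, hZ, if_pos (by omega), if_pos (by omega), if_pos (by omega), h1, h2]
    exact hS_insert ha m

lemma eS_zero (s : Finset (Fin n)) : eS n s 0 = 1 := by simp [eS]

lemma eS_big {s : Finset (Fin n)} {k : ℕ} (hk : s.card < k) : eS n s k = 0 := by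
  rw [eS, Finset.powersetCard_eq_empty.2 hk, Finset.sum_empty]

lemma eS_insert {a : Fin n} {s : Finset (Fin n)} (ha : a ∉ s) (k : ℕ) :
    eS n (insert a s) (k + 1) = eS n s (k + 1) + X a * eS n s k := by
  have hdisj : Disjoint (s.powersetCard (k + 1)) ((s.powersetCard k).image (insert a)) := by
    rw [Finset.disjoint_left]
    rintro t ht ht'
    obtain ⟨u, _, rfl⟩ := Finset.mem_image.1 ht'
    exact ha ((Finset.mem_powersetCard.1 ht).1 (Finset.mem_insert_self a u))
  rw [eS, Finset.powersetCard_succ_insert ha, Finset.sum_union hdisj]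
  congr 1
  have hinj : ∀ t₁ ∈ s.powersetCard k, ∀ t₂ ∈ s.powersetCard k,
      insert a t₁ = insert a t₂ → t₁ = t₂ := by
    intro t₁ h₁ t₂ h₂ h
    have ha₁ : a ∉ t₁ := fun h' => ha ((Finset.mem_powersetCard.1 h₁).1 h')
    have ha₂ : a ∉ t₂ := fun h' => ha ((Finset.mem_powersetCard.1 h₂).1 h')
    rw [← Finset.erase_insert ha₁, ← Finset.erase_insert ha₂, h]
  rw [Finset.sum_image hinj, eS, Finset.mul_sum]
  apply Finset.sum_congr rfl
  intro t ht
  rw [Finset.prod_insert (fun h' => ha ((Finset.mem_powersetCard.1 ht).1 h'))]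

lemma eZ_neg {s : Finset (Fin n)} {z : ℤ} (hz : z < 0) : eZ n s z = 0 := by
  rw [eZ, if_neg (by omega)]

lemma eZ_zero (s : Finset (Fin n)) : eZ n s 0 = 1 := by
  rw [eZ, if_pos le_rfl]; exact eS_zero s

lemma eZ_big {s : Finset (Fin n)} {z : ℤ} (hz : (s.card : ℤ) < z) : eZ n s z = 0 := by
  rcases le_or_gt 0 z with h | h
  · rw [eZ, if_pos h]; exact eS_big (by omega)
  · exact eZ_neg h

lemma eZ_insert {a : Fin n} {s : Finset (Fin n)} (ha : a ∉ s) (z : ℤ) :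
    eZ n (insert a s) z = eZ n s z + X a * eZ n s (z - 1) := by
  rcases lt_trichotomy z 0 with hz | rfl | hz
  · rw [eZ_neg hz, eZ_neg hz, eZ_neg (by omega), mul_zero, add_zero]
  · rw [eZ_zero, eZ_zero, eZ_neg (by omega), mul_zero, add_zero]
  · obtain ⟨k, rfl⟩ : ∃ k : ℕ, z = (k : ℤ) + 1 := ⟨(z - 1).toNat, by omega⟩
    have h1 : ((k : ℤ) + 1).toNat = k + 1 := by omega
    have h2 : ((k : ℤ) + 1 - 1).toNat = k := by omega
    rw [eZ, eZ, eZ, if_pos (by omega), if_pos (by omega), if_pos (by omega), h1, h2]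
    exact eS_insert ha k


/-- `F s z = Σ_{k=0}^{n} (-1)^k e_k(s) h_{z-k}(s)`. -/
noncomputable def FF (n : ℕ) (s : Finset (Fin n)) (z : ℤ) : MvPolynomial (Fin n) ℤ :=
  ∑ k ∈ Finset.range (n + 1), (-1 : MvPolynomial (Fin n) ℤ) ^ k * (eZ n s k * hZ n s (z - k))

/-- `G s a z = Σ_{k=0}^{n} (-1)^k e_k(s) h_{z-k}(insert a s)`. -/
noncomputable def GG (n : ℕ) (s : Finset (Fin n)) (a : Fin n) (z : ℤ) : MvPolynomial (Fin n) ℤ :=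
  ∑ k ∈ Finset.range (n + 1),
    (-1 : MvPolynomial (Fin n) ℤ) ^ k * (eZ n s k * hZ n (insert a s) (z - k))

lemma GG_rec {s : Finset (Fin n)} {a : Fin n} (ha : a ∉ s) (z : ℤ) :
    GG n s a z = X a * GG n s a (z - 1) + FF n s z := by
  rw [GG, GG, FF, Finset.mul_sum, ← Finset.sum_add_distrib]
  apply Finset.sum_congr rfl
  intro k _
  rw [hZ_insert ha (z - k)]
  have : z - k - 1 = z - 1 - k := by ring
  rw [this]
  ring

lemma GG_neg {s : Finset (Fin n)} {a : Fin n} {z : ℤ} (hz : z < 0) : GG n s a z = 0 := by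
  apply Finset.sum_eq_zero
  intro k _
  rw [hZ_neg (by omega), mul_zero, mul_zero]

lemma FF_zero_val (s : Finset (Fin n)) : FF n s 0 = 1 := by
  rw [FF]
  rw [Finset.sum_eq_single 0]
  · rw [pow_zero, one_mul, Nat.cast_zero, sub_zero, eZ_zero, hZ_zero, one_mul]
  · intro k _ hk
    rw [hZ_neg (by omega), mul_zero, mul_zero]
  · intro h
    exact absurd (Finset.mem_range.2 (Nat.succ_pos n)) h

lemma FF_eq_zero (s : Finset (Fin n)) : ∀ z : ℤ, 1 ≤ z → FF n s z = 0 := by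
  induction s using Finset.induction_on with
  | empty =>
    intro z hz
    apply Finset.sum_eq_zero
    intro k hk
    rcases Nat.eq_zero_or_pos k with rfl | hk'
    · rw [Nat.cast_zero, sub_zero, hZ_empty hz, mul_zero, mul_zero]
    · rw [eZ_big (by simp; omega), zero_mul, mul_zero]
  | @insert a s ha ih =>
    intro z hz
    have hcard : (s.card : ℤ) < n := by
      have := Finset.card_insert_of_notMem ha
      have h2 := Finset.card_le_univ (insert a s)
      simp only [Finset.card_univ, Fintype.card_fin] at h2
      omega
    have key : FF n (insert a s) z = GG n s a z - X a * GG n s a (z - 1) := by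
      rw [FF, GG]
      have step1 : ∀ k ∈ Finset.range (n + 1),
          (-1 : MvPolynomial (Fin n) ℤ) ^ k * (eZ n (insert a s) k * hZ n (insert a s) (z - k)) =
          (-1 : MvPolynomial (Fin n) ℤ) ^ k * (eZ n s k * hZ n (insert a s) (z - k)) +
          X a * ((-1 : MvPolynomial (Fin n) ℤ) ^ k *
            (eZ n s ((k : ℤ) - 1) * hZ n (insert a s) (z - k))) := by
        intro k _
        rw [eZ_insert ha (k : ℤ)]
        ring
      rw [Finset.sum_congr rfl step1, Finset.sum_add_distrib, ← Finset.mul_sum]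
      rw [sub_eq_add_neg]; congr 1
      -- second sum = - X a * GG (z-1) ... we show Σ = - GG n s a (z-1), so X a * Σ = - X a * GG
      have shift : ∑ k ∈ Finset.range (n + 1), (-1 : MvPolynomial (Fin n) ℤ) ^ k *
            (eZ n s ((k : ℤ) - 1) * hZ n (insert a s) (z - k)) = - GG n s a (z - 1) := by
        rw [Finset.sum_range_succ' (fun k => (-1 : MvPolynomial (Fin n) ℤ) ^ k *
            (eZ n s ((k : ℤ) - 1) * hZ n (insert a s) (z - k))) n]
        rw [Nat.cast_zero, zero_sub, eZ_neg (by omega), zero_mul, mul_zero, add_zero]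
        rw [GG, Finset.sum_range_succ, eZ_big (by exact_mod_cast hcard), zero_mul, mul_zero,
          add_zero, neg_eq_iff_eq_neg.symm, ← Finset.sum_neg_distrib]
        apply Finset.sum_congr rfl
        intro k _
        have e1 : ((k : ℤ) + 1) - 1 = (k : ℤ) := by ring
        have e2 : z - ((k : ℕ) + 1 : ℕ) = z - 1 - k := by push_cast; ring
        rw [e2]
        push_cast [e1]
        ring
      rw [shift]
      ring
    rw [key, GG_rec ha z, ih z hz]
    ring

lemma GG_eq {s : Finset (Fin n)} {a : Fin n} (ha : a ∉ s) (m : ℕ) :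
    GG n s a (m : ℤ) = X a ^ m := by
  induction m with
  | zero =>
    rw [Nat.cast_zero, GG_rec ha 0, FF_zero_val, GG_neg (by omega), mul_zero, zero_add, pow_zero]
  | succ m ih =>
    have e : ((m + 1 : ℕ) : ℤ) = (m : ℤ) + 1 := by push_cast; ring
    rw [e, GG_rec ha ((m : ℤ) + 1), show (m : ℤ) + 1 - 1 = (m : ℤ) by ring, ih,
      FF_eq_zero s _ (by omega), add_zero, pow_succ]
    ring


noncomputable def Hmat (n : ℕ) (m : Fin n → ℕ) :
    Matrix (Fin n) (Fin n) (MvPolynomial (Fin n) ℤ) :=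
  Matrix.of fun i k => hZ n Finset.univ ((m i : ℤ) - ((k : Fin n) : ℕ))

noncomputable def Emat (n : ℕ) : Matrix (Fin n) (Fin n) (MvPolynomial (Fin n) ℤ) :=
  Matrix.of fun k j =>
    (-1 : MvPolynomial (Fin n) ℤ) ^ (k : ℕ) * eZ n (Finset.univ.erase j) (k : ℕ)

lemma key_factor (m : Fin n → ℕ) :
    Hmat n m * Emat n = Matrix.of fun i j => (X j : MvPolynomial (Fin n) ℤ) ^ m i := by
  apply Matrix.ext
  intro i j
  rw [Matrix.mul_apply]
  have hje : j ∉ Finset.univ.erase j := Finset.notMem_erase j Finset.univ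
  have hGG := GG_eq hje (m i)
  have hins : insert j (Finset.univ.erase j) = (Finset.univ : Finset (Fin n)) :=
    Finset.insert_erase (Finset.mem_univ j)
  have hcard : ((Finset.univ.erase j).card : ℤ) < (n : ℤ) := by
    rw [Finset.card_erase_of_mem (Finset.mem_univ j)]
    simp only [Finset.card_univ, Fintype.card_fin]
    have := j.isLt
    omega
  rw [GG, hins, Finset.sum_range_succ, eZ_big hcard, zero_mul, mul_zero, add_zero,
    ← Fin.sum_univ_eq_sum_range (fun k => (-1 : MvPolynomial (Fin n) ℤ) ^ k *
      (eZ n (Finset.univ.erase j) (k : ℤ) * hZ n Finset.univ ((m i : ℤ) - k))) n] at hGG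
  rw [Matrix.of_apply, ← hGG]
  apply Finset.sum_congr rfl
  intro k _
  simp only [Hmat, Emat, Matrix.of_apply]
  push_cast
  ring

lemma det_factor (m : Fin n → ℕ) :
    Matrix.det (Matrix.of fun i j => (X j : MvPolynomial (Fin n) ℤ) ^ m i) =
      Matrix.det (Hmat n m) * Matrix.det (Emat n) := by
  rw [← key_factor m, Matrix.det_mul]

lemma alternant_eq_det (μ : Nat.Partition n) :
    alternant n μ = Matrix.det (Matrix.of fun i j =>
      (X j : MvPolynomial (Fin n) ℤ) ^ (paddedPart n μ i + (n - 1 - (i : ℕ)))) := by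
  rw [Matrix.det_apply, alternant]
  apply Fintype.sum_equiv (Equiv.inv (Equiv.Perm (Fin n)))
  intro σ
  rw [Equiv.inv_apply, Equiv.Perm.sign_inv]
  have hprod : ∏ i : Fin n, (X (σ i) : MvPolynomial (Fin n) ℤ) ^
        (paddedPart n μ i + (n - 1 - (i : ℕ))) =
      ∏ i : Fin n, (X i : MvPolynomial (Fin n) ℤ) ^
        (paddedPart n μ (σ⁻¹ i) + (n - 1 - ((σ⁻¹ i : Fin n) : ℕ))) := by
    rw [← Equiv.prod_comp σ (fun i => (X i : MvPolynomial (Fin n) ℤ) ^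
      (paddedPart n μ (σ⁻¹ i) + (n - 1 - ((σ⁻¹ i : Fin n) : ℕ))))]
    apply Finset.prod_congr rfl
    intro i _
    rw [Equiv.Perm.inv_def, Equiv.symm_apply_apply]
  rw [hprod, Units.smul_def]
  rfl


noncomputable def W (n : ℕ) : MvPolynomial (Fin n) ℤ :=
  ∏ i : Fin n, ∏ j ∈ Finset.Ioi i, (X j - X i : MvPolynomial (Fin n) ℤ)

noncomputable def sgn (n : ℕ) : MvPolynomial (Fin n) ℤ :=
  (((Equiv.Perm.sign (Fin.revPerm : Equiv.Perm (Fin n))) : ℤ) : MvPolynomial (Fin n) ℤ)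

lemma sgn_mul_self : sgn n * sgn n = 1 := by
  rw [sgn, ← Int.cast_mul, ← Units.val_mul, Int.units_mul_self]
  norm_num

lemma det_Pdelta :
    Matrix.det (Matrix.of fun i j : Fin n =>
      (X j : MvPolynomial (Fin n) ℤ) ^ (n - 1 - (i : ℕ))) = sgn n * W n := by
  rw [← Matrix.det_transpose]
  have : Matrix.transpose (Matrix.of fun i j : Fin n =>
      (X j : MvPolynomial (Fin n) ℤ) ^ (n - 1 - (i : ℕ))) =
      (Matrix.vandermonde (fun i : Fin n => (X i : MvPolynomial (Fin n) ℤ))).submatrix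
        id ⇑(Fin.revPerm) := by
    apply Matrix.ext
    intro i j
    simp only [Matrix.transpose_apply, Matrix.of_apply, Matrix.submatrix_apply,
      Matrix.vandermonde_apply, id_eq, Fin.revPerm_apply, Fin.val_rev]
    congr 1
    omega
  rw [this, Matrix.det_permute', Matrix.det_vandermonde]
  rfl

lemma det_Hdelta :
    Matrix.det (Hmat n (fun i => n - 1 - (i : ℕ))) = sgn n := by
  have hT : Hmat n (fun i => n - 1 - (i : ℕ)) =
      (Matrix.of fun i k : Fin n =>
        hZ n Finset.univ (((k : ℕ) : ℤ) - ((i : ℕ) : ℤ))).submatrix id ⇑(Fin.revPerm) := by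
    apply Matrix.ext
    intro i k
    simp only [Hmat, Matrix.of_apply, Matrix.submatrix_apply, id_eq, Fin.revPerm_apply,
      Fin.val_rev]
    congr 1
    have hi := i.isLt
    have hk := k.isLt
    omega
  rw [hT, Matrix.det_permute']
  have hTri : Matrix.det (Matrix.of fun i k : Fin n =>
      hZ n Finset.univ (((k : ℕ) : ℤ) - ((i : ℕ) : ℤ))) = 1 := by
    rw [Matrix.det_of_upperTriangular]
    · apply Finset.prod_eq_one
      intro i _
      simp only [Matrix.of_apply, sub_self]
      exact hZ_zero _
    · intro i k hik
      simp only [Matrix.of_apply]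
      apply hZ_neg
      simp only [id_eq] at hik
      have : (k : ℕ) < (i : ℕ) := hik
      omega
  rw [hTri, mul_one]
  rfl

lemma det_Emat : Matrix.det (Emat n) = W n := by
  have h := det_factor (n := n) (fun i => n - 1 - (i : ℕ))
  rw [det_Pdelta, det_Hdelta] at h
  have := congrArg (fun x => sgn n * x) h
  simp only [← mul_assoc, sgn_mul_self, one_mul] at this
  exact this.symm

lemma prod_pairs (f : Fin n → Fin n → MvPolynomial (Fin n) ℤ) :
    ∏ p ∈ Finset.univ.filter (fun p : Fin n × Fin n => p.1 < p.2), f p.1 p.2 =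
      ∏ i : Fin n, ∏ j ∈ Finset.Ioi i, f i j := by
  rw [← Finset.prod_sigma Finset.univ (fun i => Finset.Ioi i)
    (fun x => f x.1 x.2)]
  refine Finset.prod_nbij' (i := fun p : Fin n × Fin n => (⟨p.1, p.2⟩ : Σ _ : Fin n, Fin n))
    (j := fun x : Σ _ : Fin n, Fin n => (x.1, x.2)) ?_ ?_ ?_ ?_ ?_
  · intro p hp
    simp only [Finset.mem_filter, Finset.mem_univ, true_and] at hp
    simp [Finset.mem_Ioi, hp]
  · intro x hx
    simp only [Finset.mem_sigma, Finset.mem_univ, Finset.mem_Ioi, true_and] at hx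
    simp [hx]
  · intro p _; rfl
  · intro x _; rfl
  · intro p _; rfl

lemma W_eq : W n = (-1 : MvPolynomial (Fin n) ℤ) ^ (n * (n - 1) / 2) * vandermondeProd n := by
  rw [W, vandermondeProd, prod_pairs (fun i j => (X i - X j : MvPolynomial (Fin n) ℤ))]
  have h1 : ∏ i : Fin n, ∏ j ∈ Finset.Ioi i, (X j - X i : MvPolynomial (Fin n) ℤ) =
      ∏ i : Fin n, ∏ j ∈ Finset.Ioi i,
        ((-1) * (X i - X j) : MvPolynomial (Fin n) ℤ) := by
    apply Finset.prod_congr rfl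
    intro i _
    apply Finset.prod_congr rfl
    intro j _
    ring
  rw [h1]
  simp_rw [Finset.prod_mul_distrib, Finset.prod_const]
  congr 1
  simp_rw [Fin.card_Ioi]
  rw [Finset.prod_pow_eq_pow_sum]
  congr 1
  rw [Fin.sum_univ_eq_sum_range (fun i => n - 1 - i) n,
    Finset.sum_range_reflect (fun i => i) n]
  exact Finset.sum_range_id n


lemma hS_univ (m : ℕ) : hS n Finset.univ m = hsymm (Fin n) ℤ m := by
  rw [hS, Finset.sym_univ]
  rfl

lemma hInt_eq_hZ (z : ℤ) : hInt n z = hZ n Finset.univ z := by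
  rw [hInt, hZ]
  split_ifs with h
  · rw [hS_univ]
  · rfl

end JT

theorem stmt_2 (n : ℕ) (hn : 1 ≤ n) (μ : Nat.Partition n) :
    alternant n μ =
      (-1 : MvPolynomial (Fin n) ℤ) ^ (n * (n - 1) / 2) * vandermondeProd n *
        Matrix.det (Matrix.of fun i j : Fin n =>
          hInt n ((paddedPart n μ j : ℤ) + (n : ℤ) - ((j : ℕ) + 1 : ℕ) - ((i : ℕ) + 1 : ℕ) + 1)) := by
  have hMT : (Matrix.of fun i j : Fin n =>
      hInt n ((paddedPart n μ j : ℤ) + (n : ℤ) - ((j : ℕ) + 1 : ℕ) - ((i : ℕ) + 1 : ℕ) + 1)) =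
      Matrix.transpose (JT.Hmat n (fun i => paddedPart n μ i + (n - 1 - (i : ℕ)))) := by
    apply Matrix.ext
    intro i j
    simp only [Matrix.of_apply, Matrix.transpose_apply, JT.Hmat]
    rw [JT.hInt_eq_hZ]
    congr 1
    have hi := i.isLt
    have hj := j.isLt
    push_cast
    omega
  rw [JT.alternant_eq_det μ, JT.det_factor, JT.det_Emat, JT.W_eq, hMT, Matrix.det_transpose]
  ring
end

section
/- In ℤ[x_1,…,x_N] for any number of variables N, the identity h_2^2·h_1 + h_4·h_1 − h_3·h_2 − h_3·h_1^2 = m_{(2,2,1)} + 2·m_{(2,1,1,1)} + 5·m_{(1,1,1,1,1)} holds. (This is the paper's Row 5 result for S_5: χ^{(2,2,1)} = φ^{(2,2,1)} + φ^{(4,1)} − φ^{(3,2)} − φ^{(3,1,1)} together with the Kostka column for (2,2,1).) -/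
open MvPolynomial Finsupp

set_option linter.unusedSectionVars false
set_option maxHeartbeats 1000000

namespace Stmt15Aux

variable {σ : Type*} [DecidableEq σ] [LinearOrder σ]

/-- total degree of an exponent vector -/
noncomputable def dg (d : σ →₀ ℕ) : ℕ := Multiset.card d.toMultiset

lemma dg_add (u v : σ →₀ ℕ) : dg (u + v) = dg u + dg v := by
  simp [dg, Finsupp.toMultiset_add]

lemma dg_single (i : σ) (n : ℕ) : dg (Finsupp.single i n) = n := by
  simp [dg, Finsupp.toMultiset_single]

lemma dg_eq_sum (d : σ →₀ ℕ) : dg d = ∑ i ∈ d.support, d i := by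
  simp [dg, Finsupp.card_toMultiset, Finsupp.sum]

lemma dg_eq_one {v : σ →₀ ℕ} (h : dg v = 1) : ∃ i, v = Finsupp.single i 1 := by
  rw [dg, Multiset.card_eq_one] at h
  obtain ⟨a, ha⟩ := h
  rw [Finsupp.toMultiset_eq_iff] at ha
  exact ⟨a, by rw [ha, Multiset.toFinsupp_singleton]⟩

lemma dg_eq_two {v : σ →₀ ℕ} (h : dg v = 2) :
    ∃ i j, i ≤ j ∧ v = Finsupp.single i 1 + Finsupp.single j 1 := by
  rw [dg, Multiset.card_eq_two] at h
  obtain ⟨x, y, hxy⟩ := h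
  rw [Finsupp.toMultiset_eq_iff] at hxy
  rcases le_total x y with hle | hle
  · refine ⟨x, y, hle, ?_⟩
    rw [hxy, show ({x, y} : Multiset σ) = {x} + {y} by rfl, Multiset.toFinsupp_add,
      Multiset.toFinsupp_singleton, Multiset.toFinsupp_singleton]
  · refine ⟨y, x, hle, ?_⟩
    rw [hxy, show ({x, y} : Multiset σ) = {y} + {x} by rw [Multiset.pair_comm]; rfl,
      Multiset.toFinsupp_add, Multiset.toFinsupp_singleton, Multiset.toFinsupp_singleton]

lemma multiset_prod_X (R : Type*) [CommSemiring R] (m : Multiset σ) :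
    (m.map (X : σ → MvPolynomial σ R)).prod = monomial m.toFinsupp 1 := by
  induction m using Multiset.induction with
  | empty => simp
  | cons a s ih =>
      rw [Multiset.map_cons, Multiset.prod_cons, ih, show (a ::ₘ s) = {a} + s by
        simp [Multiset.singleton_add], Multiset.toFinsupp_add, Multiset.toFinsupp_singleton]
      rw [X, monomial_mul, one_mul]

/-- the shape of an exponent vector: the multiset of its nonzero values -/
def shp (d : σ →₀ ℕ) : Multiset ℕ := d.support.val.map d

lemma ofSym_parts {n : ℕ} (s : Sym σ n) : (Nat.Partition.ofSym s).parts = shp s.1.toFinsupp := by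
  rfl

lemma shp_sum (d : σ →₀ ℕ) : (shp d).sum = dg d := by
  rw [dg, Finsupp.card_toMultiset]
  rfl

section CoeffLemmas

variable [Fintype σ]

lemma coeff_hsymm (n : ℕ) (d : σ →₀ ℕ) :
    coeff d (hsymm σ ℤ n) = if dg d = n then 1 else 0 := by
  rw [hsymm]
  simp_rw [multiset_prod_X, coeff_sum, coeff_monomial]
  by_cases h : dg d = n
  · have key : ∀ s : Sym σ n, (s.1.toFinsupp = d) ↔ s = Sym.mk d.toMultiset h := by
      intro s
      constructor
      · intro hs
        apply Subtype.ext
        rw [Multiset.toFinsupp_eq_iff] at hs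
        exact hs
      · rintro rfl
        simp
    simp_rw [key]
    simp [h]
  · rw [if_neg h]
    apply Finset.sum_eq_zero
    intro s _
    rw [if_neg]
    intro hs
    apply h
    rw [← hs]
    show Multiset.card (Finsupp.toMultiset s.1.toFinsupp) = n
    rw [Multiset.toFinsupp_toMultiset]
    exact s.2

lemma coeff_msymm {n : ℕ} (μ : Nat.Partition n) (d : σ →₀ ℕ) :
    coeff d (msymm σ ℤ μ) = if shp d = μ.parts then 1 else 0 := by
  rw [msymm]
  simp_rw [multiset_prod_X, coeff_sum, coeff_monomial]
  by_cases h : shp d = μ.parts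
  · have hdg : dg d = n := by rw [← shp_sum, h, μ.parts_sum]
    have hcard : Multiset.card d.toMultiset = n := hdg
    have hof : Nat.Partition.ofSym (Sym.mk d.toMultiset hcard) = μ := by
      apply Nat.Partition.ext
      rw [ofSym_parts]
      show shp (Multiset.toFinsupp (Finsupp.toMultiset d)) = μ.parts
      rw [Finsupp.toMultiset_toFinsupp]
      exact h
    have key : ∀ s : {a : Sym σ n // Nat.Partition.ofSym a = μ},
        (s.1.1.toFinsupp = d) ↔ s = ⟨Sym.mk d.toMultiset hcard, hof⟩ := by
      intro s
      constructor
      · intro hs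
        apply Subtype.ext
        apply Subtype.ext
        rw [Multiset.toFinsupp_eq_iff] at hs
        exact hs
      · rintro rfl
        simp
    simp_rw [key]
    simp [h]
  · rw [if_neg h]
    apply Finset.sum_eq_zero
    intro s _
    rw [if_neg]
    intro hs
    apply h
    rw [← hs, ← ofSym_parts, s.2]

end CoeffLemmas

/-! ### counting machinery -/

lemma peel (d : σ →₀ ℕ) (f : (σ →₀ ℕ) → ℤ) :
    ∑ p ∈ Finset.HasAntidiagonal.antidiagonal d, f p.1 * (if dg p.2 = 1 then 1 else 0) =
      ∑ i ∈ d.support, f (d - Finsupp.single i 1) := by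
  simp_rw [mul_ite, mul_one, mul_zero]
  rw [← Finset.sum_filter]
  symm
  apply Finset.sum_bij (fun i _ => ((d - Finsupp.single i 1, Finsupp.single i 1) :
      (σ →₀ ℕ) × (σ →₀ ℕ)))
  · intro i hi
    rw [Finset.mem_filter, Finset.HasAntidiagonal.mem_antidiagonal]
    refine ⟨tsub_add_cancel_of_le ?_, dg_single i 1⟩
    rw [Finsupp.single_le_iff]
    rw [Finsupp.mem_support_iff] at hi
    omega
  · intro i _ j _ hij
    have := congrArg Prod.snd hij
    simpa using (Finsupp.single_left_inj one_ne_zero).mp this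
  · intro p hp
    rw [Finset.mem_filter, Finset.HasAntidiagonal.mem_antidiagonal] at hp
    obtain ⟨i, hi⟩ := dg_eq_one hp.2
    have hle : Finsupp.single i 1 ≤ d := by
      rw [← hp.1, ← hi]; exact le_add_self
    refine ⟨i, ?_, ?_⟩
    · rw [Finsupp.mem_support_iff]
      have := (Finsupp.single_le_iff).mp hle
      omega
    · have h1 : p.1 = d - Finsupp.single i 1 := by
        rw [← hi]; exact eq_tsub_of_add_eq hp.1
      rw [← h1, ← hi]
  · intro i _
    rfl

lemma forced (d : σ →₀ ℕ) (a b : ℕ) (h : dg d = a + b) :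
    ∑ p ∈ Finset.HasAntidiagonal.antidiagonal d,
        (if dg p.1 = a then (1:ℤ) else 0) * (if dg p.2 = b then 1 else 0) =
      ∑ p ∈ Finset.HasAntidiagonal.antidiagonal d, (if dg p.2 = b then (1:ℤ) else 0) := by
  apply Finset.sum_congr rfl
  intro p hp
  rw [Finset.HasAntidiagonal.mem_antidiagonal] at hp
  have hd : dg p.1 + dg p.2 = a + b := by rw [← dg_add, hp, h]
  by_cases h2 : dg p.2 = b
  · rw [if_pos h2, if_pos (by omega), one_mul]
  · rw [if_neg h2, mul_zero]

lemma vanish (d : σ →₀ ℕ) (a b : ℕ) (h : dg d ≠ a + b) :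
    ∑ p ∈ Finset.HasAntidiagonal.antidiagonal d,
        (if dg p.1 = a then (1:ℤ) else 0) * (if dg p.2 = b then 1 else 0) = 0 := by
  apply Finset.sum_eq_zero
  intro p hp
  rw [Finset.HasAntidiagonal.mem_antidiagonal] at hp
  by_cases h1 : dg p.1 = a
  · rw [if_pos h1, if_neg, mul_zero]
    intro h2
    apply h
    rw [← hp, dg_add, h1, h2]
  · rw [if_neg h1, zero_mul]

def st (d : σ →₀ ℕ) : ℕ := d.support.card
def tt (d : σ →₀ ℕ) : ℕ := (d.support.filter fun i => 2 ≤ d i).card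
def pr (d : σ →₀ ℕ) : ℕ := ((d.support ×ˢ d.support).filter fun p => p.1 < p.2).card
def nn (v : ℕ) (d : σ →₀ ℕ) : ℕ := (d.support.filter fun i => d i = v).card
def mm (d : σ →₀ ℕ) : ℕ := (d.support.filter fun i => 3 ≤ d i).card

lemma two_mul_pr (d : σ →₀ ℕ) : 2 * pr d = st d * st d - st d := by
  rw [st, ← Finset.offDiag_card]
  have hsplit : d.support.offDiag = ((d.support ×ˢ d.support).filter fun p => p.1 < p.2) ∪
      ((d.support ×ˢ d.support).filter fun p => p.2 < p.1) := by
    ext p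
    simp only [Finset.mem_offDiag, Finset.mem_union, Finset.mem_filter, Finset.mem_product]
    constructor
    · rintro ⟨h1, h2, h3⟩
      rcases lt_or_gt_of_ne h3 with h | h
      · exact Or.inl ⟨⟨h1, h2⟩, h⟩
      · exact Or.inr ⟨⟨h1, h2⟩, h⟩
    · rintro (⟨⟨h1, h2⟩, h⟩ | ⟨⟨h1, h2⟩, h⟩)
      · exact ⟨h1, h2, ne_of_lt h⟩
      · exact ⟨h1, h2, (ne_of_lt h).symm⟩
  have hdisj : Disjoint ((d.support ×ˢ d.support).filter fun p => p.1 < p.2)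
      ((d.support ×ˢ d.support).filter fun p => p.2 < p.1) := by
    rw [Finset.disjoint_left]
    intro p hp hq
    simp only [Finset.mem_filter] at hp hq
    exact absurd hq.2 (not_lt_of_gt hp.2)
  rw [hsplit, Finset.card_union_of_disjoint hdisj]
  have hswap : ((d.support ×ˢ d.support).filter fun p => p.2 < p.1).card = pr d := by
    apply Finset.card_bij (fun p _ => (p.2, p.1))
    · intro p hp
      simp only [Finset.mem_filter, Finset.mem_product] at hp ⊢
      exact ⟨⟨hp.1.2, hp.1.1⟩, hp.2⟩
    · intro p _ q _ h
      rw [Prod.ext_iff] at h ⊢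
      exact ⟨h.2, h.1⟩
    · intro p hp
      simp only [Finset.mem_filter, Finset.mem_product] at hp
      refine ⟨(p.2, p.1), ?_, rfl⟩
      simp only [Finset.mem_filter, Finset.mem_product]
      exact ⟨⟨hp.1.2, hp.1.1⟩, hp.2⟩
  rw [hswap, show ((d.support ×ˢ d.support).filter fun p => p.1 < p.2).card = pr d from rfl]
  omega

lemma two_mul_pr_int (d : σ →₀ ℕ) : (2 * pr d : ℤ) = st d * st d - st d := by
  have h := two_mul_pr d
  have hle : st d ≤ st d * st d := by
    rcases Nat.eq_zero_or_pos (st d) with h0 | h0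
    · simp [h0]
    · exact Nat.le_mul_of_pos_left _ h0
  omega

lemma pair_le {d : σ →₀ ℕ} {i j : σ} (hi : i ∈ d.support) (hj : j ∈ d.support)
    (h : i ≠ j) : Finsupp.single i 1 + Finsupp.single j 1 ≤ d := by
  rw [Finsupp.le_def]
  intro a
  rw [Finsupp.mem_support_iff] at hi hj
  rw [Finsupp.add_apply, Finsupp.single_apply, Finsupp.single_apply]
  rcases eq_or_ne i a with rfl | h1
  · rw [if_pos rfl, if_neg (fun h2 : j = i => h h2.symm)]
    omega
  · rw [if_neg h1]
    rcases eq_or_ne j a with rfl | h2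
    · rw [if_pos rfl]; omega
    · rw [if_neg h2]; omega

lemma g2_eval (d : σ →₀ ℕ) :
    ∑ p ∈ Finset.HasAntidiagonal.antidiagonal d, (if dg p.2 = 2 then (1:ℤ) else 0) = tt d + pr d := by
  rw [Finset.sum_boole]
  have key : ((Finset.HasAntidiagonal.antidiagonal d).filter fun p => dg p.2 = 2).card = tt d + pr d := by
    have hW : (((d.support.filter fun i => 2 ≤ d i).image fun i => (i, i)) ∪
        ((d.support ×ˢ d.support).filter fun p => p.1 < p.2)).card = tt d + pr d := by
      have hdisj : Disjoint ((d.support.filter fun i => 2 ≤ d i).image fun i => (i, i))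
          ((d.support ×ˢ d.support).filter fun p => p.1 < p.2) := by
        rw [Finset.disjoint_left]
        intro p hp hq
        simp only [Finset.mem_image, Finset.mem_filter] at hp hq
        obtain ⟨i, _, rfl⟩ := hp
        exact lt_irrefl i hq.2
      rw [Finset.card_union_of_disjoint hdisj, Finset.card_image_of_injective _
        (fun a b h => by simpa using (Prod.ext_iff.mp h).1)]
      rfl
    rw [← hW]
    symm
    apply Finset.card_bij (fun p _ =>
      ((d - (Finsupp.single p.1 1 + Finsupp.single p.2 1),
        Finsupp.single p.1 1 + Finsupp.single p.2 1) : (σ →₀ ℕ) × (σ →₀ ℕ)))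
    · intro p hp
      have hle : Finsupp.single p.1 1 + Finsupp.single p.2 1 ≤ d := by
        simp only [Finset.mem_union, Finset.mem_image, Finset.mem_filter,
          Finset.mem_product] at hp
        rcases hp with ⟨i, hi, rfl⟩ | ⟨⟨h1, h2⟩, hlt⟩
        · show Finsupp.single i 1 + Finsupp.single i 1 ≤ d
          rw [← Finsupp.single_add, Finsupp.single_le_iff]
          exact hi.2
        · exact pair_le h1 h2 (ne_of_lt hlt)
      rw [Finset.mem_filter, Finset.HasAntidiagonal.mem_antidiagonal]
      constructor
      · exact tsub_add_cancel_of_le hle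
      · rw [dg_add, dg_single, dg_single]
    · intro p hp q hq h
      have h2 := (Prod.ext_iff.mp h).2
      have hmp : (p.1 ::ₘ {p.2} : Multiset σ) = q.1 ::ₘ {q.2} := by
        have := congrArg Finsupp.toMultiset h2
        simpa [Finsupp.toMultiset_add, Finsupp.toMultiset_single] using this
      have hple : p.1 ≤ p.2 := by
        simp only [Finset.mem_union, Finset.mem_image, Finset.mem_filter] at hp
        rcases hp with ⟨i, _, rfl⟩ | ⟨_, hlt⟩
        · exact le_rfl
        · exact le_of_lt hlt
      have hqle : q.1 ≤ q.2 := by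
        simp only [Finset.mem_union, Finset.mem_image, Finset.mem_filter] at hq
        rcases hq with ⟨i, _, rfl⟩ | ⟨_, hlt⟩
        · exact le_rfl
        · exact le_of_lt hlt
      rcases Multiset.cons_eq_cons.mp hmp with ⟨ha, hb⟩ | ⟨hne, cs, hcs1, hcs2⟩
      · exact Prod.ext ha (Multiset.singleton_inj.mp hb)
      · have hcs0 : cs = 0 := by
          have := congrArg Multiset.card hcs1
          simpa using this
        subst hcs0
        have e1 : p.2 = q.1 := by simpa using hcs1
        have e2 : q.2 = p.1 := by simpa using hcs2
        exact absurd (le_antisymm (e1 ▸ hple) (e2 ▸ hqle)) hne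
    · intro p hp
      rw [Finset.mem_filter, Finset.HasAntidiagonal.mem_antidiagonal] at hp
      obtain ⟨i, j, hij, hv⟩ := dg_eq_two hp.2
      have hle : p.2 ≤ d := hp.1 ▸ le_add_self
      have hile : (Finsupp.single i 1 + Finsupp.single j 1) ≤ d := hv ▸ hle
      have hdi : 1 ≤ d i := by
        have := Finsupp.le_def.mp hile i
        simp only [Finsupp.add_apply, Finsupp.single_apply] at this
        split_ifs at this <;> omega
      have hdj : 1 ≤ d j := by
        have := Finsupp.le_def.mp hile j
        simp only [Finsupp.add_apply, Finsupp.single_apply] at this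
        split_ifs at this <;> omega
      have hi : i ∈ d.support := by rw [Finsupp.mem_support_iff]; omega
      have hj : j ∈ d.support := by rw [Finsupp.mem_support_iff]; omega
      refine ⟨(i, j), ?_, ?_⟩
      · simp only [Finset.mem_union, Finset.mem_image, Finset.mem_filter, Finset.mem_product]
        rcases lt_or_eq_of_le hij with hlt | rfl
        · exact Or.inr ⟨⟨hi, hj⟩, hlt⟩
        · refine Or.inl ⟨i, ⟨hi, ?_⟩, rfl⟩
          have := Finsupp.le_def.mp hile i
          simp only [Finsupp.add_apply, Finsupp.single_apply] at this
          split_ifs at this <;> omega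
      · have h1 : p.1 = d - (Finsupp.single i 1 + Finsupp.single j 1) := by
          rw [← hv]; exact eq_tsub_of_add_eq hp.1
        rw [← h1, ← hv]
  rw [key]
  push_cast
  ring

/-! ### behaviour of stats under removing one unit -/

lemma sub_single_apply (d : σ →₀ ℕ) (i j : σ) :
    (d - Finsupp.single i 1 : σ →₀ ℕ) j = d j - (if i = j then 1 else 0) := by
  rw [Finsupp.tsub_apply, Finsupp.single_apply]

lemma dg_sub_single {d : σ →₀ ℕ} {i : σ} (hi : i ∈ d.support) :
    dg (d - Finsupp.single i 1) = dg d - 1 := by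
  have hle : Finsupp.single i 1 ≤ d := by
    rw [Finsupp.single_le_iff]
    rw [Finsupp.mem_support_iff] at hi
    omega
  have h := tsub_add_cancel_of_le hle
  have h2 := congrArg dg h
  rw [dg_add, dg_single] at h2
  omega

lemma supp_sub {d : σ →₀ ℕ} {i : σ} (hi : i ∈ d.support) :
    (d - Finsupp.single i 1).support
      = if d i = 1 then d.support.erase i else d.support := by
  rw [Finsupp.mem_support_iff] at hi
  ext j
  rw [Finsupp.mem_support_iff, sub_single_apply]
  rcases eq_or_ne i j with rfl | hij
  · rw [if_pos rfl]
    split_ifs with h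
    · constructor
      · intro hj; exfalso; omega
      · intro hj; exact absurd (Finset.mem_erase.mp hj).1 (by simp)
    · rw [Finsupp.mem_support_iff]
      omega
  · rw [if_neg hij]
    split_ifs with h
    · rw [Finset.mem_erase, Finsupp.mem_support_iff]
      constructor
      · intro hj; exact ⟨Ne.symm hij, by omega⟩
      · rintro ⟨-, hj⟩; omega
    · rw [Finsupp.mem_support_iff]
      omega

lemma st_sub {d : σ →₀ ℕ} {i : σ} (hi : i ∈ d.support) :
    (st (d - Finsupp.single i 1) : ℤ) = st d - (if d i = 1 then 1 else 0) := by
  rw [st, supp_sub hi]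
  split_ifs with h
  · rw [Finset.card_erase_of_mem hi]
    have h1 : 1 ≤ d.support.card := Finset.card_pos.mpr ⟨i, hi⟩
    rw [Nat.cast_sub h1]
    rfl
  · simp [st]

lemma tt_filter {d : σ →₀ ℕ} {i : σ} (hi : i ∈ d.support) :
    ((d - Finsupp.single i 1).support.filter fun j => 2 ≤ (d - Finsupp.single i 1 : σ →₀ ℕ) j)
      = if d i = 2 then (d.support.filter fun j => 2 ≤ d j).erase i
        else (d.support.filter fun j => 2 ≤ d j) := by
  have hi' := hi
  rw [Finsupp.mem_support_iff] at hi'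
  ext j
  rw [Finset.mem_filter, Finsupp.mem_support_iff, sub_single_apply]
  rcases eq_or_ne i j with rfl | hij
  · rw [if_pos rfl]
    split_ifs with h
    · constructor
      · rintro ⟨h1, h2⟩; exfalso; omega
      · intro hj; exact absurd (Finset.mem_erase.mp hj).1 (by simp)
    · rw [Finset.mem_filter, Finsupp.mem_support_iff]
      omega
  · rw [if_neg hij]
    split_ifs with h
    · rw [Finset.mem_erase, Finset.mem_filter, Finsupp.mem_support_iff]
      constructor
      · rintro ⟨h1, h2⟩; exact ⟨Ne.symm hij, by omega, by omega⟩
      · rintro ⟨h1, h2, h3⟩; omega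
    · rw [Finset.mem_filter, Finsupp.mem_support_iff]
      omega

lemma tt_sub {d : σ →₀ ℕ} {i : σ} (hi : i ∈ d.support) :
    (tt (d - Finsupp.single i 1) : ℤ) = tt d - (if d i = 2 then 1 else 0) := by
  rw [tt, tt_filter hi]
  split_ifs with h
  · have hmem : i ∈ d.support.filter fun j => 2 ≤ d j := by
      rw [Finset.mem_filter]
      exact ⟨hi, by omega⟩
    rw [Finset.card_erase_of_mem hmem]
    have h1 : 1 ≤ (d.support.filter fun j => 2 ≤ d j).card := Finset.card_pos.mpr ⟨i, hmem⟩
    rw [Nat.cast_sub h1]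
    rfl
  · simp [tt]

/-! ### value-class partition of the support -/

lemma class_split (d : σ →₀ ℕ) :
    st d = nn 1 d + nn 2 d + mm d ∧ tt d = nn 2 d + mm d ∧
      nn 1 d + 2 * nn 2 d + 3 * mm d ≤ dg d ∧ (mm d = 0 → dg d = nn 1 d + 2 * nn 2 d) := by
  classical
  have hdisj12 : Disjoint (d.support.filter fun i => d i = 1)
      (d.support.filter fun i => d i = 2) := by
    rw [Finset.disjoint_left]
    intro x h1 h2
    rw [Finset.mem_filter] at h1 h2
    omega
  have hdisj3 : Disjoint ((d.support.filter fun i => d i = 1) ∪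
      (d.support.filter fun i => d i = 2)) (d.support.filter fun i => 3 ≤ d i) := by
    rw [Finset.disjoint_left]
    intro x h1 h2
    simp only [Finset.mem_union, Finset.mem_filter] at h1 h2
    omega
  have hsupp : d.support = ((d.support.filter fun i => d i = 1) ∪
      (d.support.filter fun i => d i = 2)) ∪ (d.support.filter fun i => 3 ≤ d i) := by
    ext j
    simp only [Finset.mem_union, Finset.mem_filter, Finsupp.mem_support_iff]
    constructor
    · intro hj
      rcases Nat.lt_or_ge (d j) 3 with h | h
      · rcases Nat.lt_or_ge (d j) 2 with h2 | h2
        · exact Or.inl (Or.inl ⟨hj, by omega⟩)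
        · exact Or.inl (Or.inr ⟨hj, by omega⟩)
      · exact Or.inr ⟨hj, h⟩
    · rintro ((⟨hj, _⟩ | ⟨hj, _⟩) | ⟨hj, _⟩) <;> exact hj
  have htt : (d.support.filter fun i => 2 ≤ d i) =
      (d.support.filter fun i => d i = 2) ∪ (d.support.filter fun i => 3 ≤ d i) := by
    ext j
    simp only [Finset.mem_union, Finset.mem_filter]
    constructor
    · rintro ⟨hj, h2⟩
      rcases Nat.lt_or_ge (d j) 3 with h | h
      · exact Or.inl ⟨hj, by omega⟩
      · exact Or.inr ⟨hj, h⟩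
    · rintro (⟨hj, h2⟩ | ⟨hj, h2⟩) <;> exact ⟨hj, by omega⟩
  have hdisj23 : Disjoint (d.support.filter fun i => d i = 2)
      (d.support.filter fun i => 3 ≤ d i) := by
    rw [Finset.disjoint_left]
    intro x h1 h2
    rw [Finset.mem_filter] at h1 h2
    omega
  refine ⟨?_, ?_, ?_, ?_⟩
  · rw [st, hsupp, Finset.card_union_of_disjoint hdisj3, Finset.card_union_of_disjoint hdisj12]
    rfl
  · rw [tt, htt, Finset.card_union_of_disjoint hdisj23]
    rfl
  · rw [dg_eq_sum, hsupp, Finset.sum_union hdisj3, Finset.sum_union hdisj12]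
    have e1 : ∑ i ∈ d.support.filter (fun i => d i = 1), d i = nn 1 d := by
      rw [Finset.sum_congr rfl (fun i hi => (Finset.mem_filter.mp hi).2), Finset.sum_const,
        smul_eq_mul, mul_one]
      rfl
    have e2 : ∑ i ∈ d.support.filter (fun i => d i = 2), d i = 2 * nn 2 d := by
      rw [Finset.sum_congr rfl (fun i hi => (Finset.mem_filter.mp hi).2), Finset.sum_const,
        smul_eq_mul, mul_comm]
      rfl
    have e3 : 3 * mm d ≤ ∑ i ∈ d.support.filter (fun i => 3 ≤ d i), d i := by
      have := Finset.card_nsmul_le_sum (d.support.filter fun i => 3 ≤ d i) d 3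
        (fun x hx => (Finset.mem_filter.mp hx).2)
      rw [smul_eq_mul] at this
      rw [mul_comm]
      exact this
    omega
  · intro hm
    rw [dg_eq_sum, hsupp, Finset.sum_union hdisj3, Finset.sum_union hdisj12]
    have e1 : ∑ i ∈ d.support.filter (fun i => d i = 1), d i = nn 1 d := by
      rw [Finset.sum_congr rfl (fun i hi => (Finset.mem_filter.mp hi).2), Finset.sum_const,
        smul_eq_mul, mul_one]
      rfl
    have e2 : ∑ i ∈ d.support.filter (fun i => d i = 2), d i = 2 * nn 2 d := by
      rw [Finset.sum_congr rfl (fun i hi => (Finset.mem_filter.mp hi).2), Finset.sum_const,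
        smul_eq_mul, mul_comm]
      rfl
    have e3 : ∑ i ∈ d.support.filter (fun i => 3 ≤ d i), d i = 0 := by
      have : (d.support.filter fun i => 3 ≤ d i) = ∅ := Finset.card_eq_zero.mp hm
      rw [this, Finset.sum_empty]
    omega

/-! ### shape characterization -/

lemma shp_count (d : σ →₀ ℕ) (v : ℕ) : (shp d).count v = nn v d := by
  rw [shp, Multiset.count_map, nn]
  have he : Multiset.filter (fun a => v = d a) d.support.val
      = Multiset.filter (fun a => d a = v) d.support.val :=
    Multiset.filter_congr (fun x _ => by constructor <;> (intro h; exact h.symm))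
  rw [he]
  rfl

lemma shp_card (d : σ →₀ ℕ) : Multiset.card (shp d) = st d := by
  rw [shp, Multiset.card_map]
  rfl

lemma char_iff (d : σ →₀ ℕ) (a b : ℕ) :
    shp d = Multiset.replicate a 1 + Multiset.replicate b 2 ↔
      nn 1 d = a ∧ nn 2 d = b ∧ st d = a + b := by
  constructor
  · intro h
    have h1 := shp_count d 1
    have h2 := shp_count d 2
    have hc := shp_card d
    rw [h] at h1 h2 hc
    simp [Multiset.count_replicate] at h1 h2
    simp at hc
    exact ⟨h1.symm, h2.symm, by omega⟩
  · rintro ⟨h1, h2, hs⟩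
    have f1 : (shp d).filter (· = 1) = Multiset.replicate a 1 := by
      rw [Multiset.filter_eq', shp_count, h1]
    have f2 : (shp d).filter (· = 2) = Multiset.replicate b 2 := by
      rw [Multiset.filter_eq', shp_count, h2]
    have hff : (shp d).filter (· = 1) + (shp d).filter (· = 2)
        = (shp d).filter (fun x => x = 1 ∨ x = 2) := by
      rw [Multiset.filter_add_filter]
      have : Multiset.filter (fun x => x = 1 ∧ x = 2) (shp d) = 0 := by
        rw [Multiset.filter_eq_nil]
        intro x _ hx
        omega
      rw [this, add_zero]
    have hcard : Multiset.card ((shp d).filter (fun x => x = 1 ∨ x = 2)) = a + b := by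
      rw [← hff, Multiset.card_add, f1, f2, Multiset.card_replicate, Multiset.card_replicate]
    have heq : (shp d).filter (fun x => x = 1 ∨ x = 2) = shp d := by
      apply Multiset.eq_of_le_of_card_le (Multiset.filter_le _ _)
      rw [hcard, shp_card, hs]
    rw [← heq, ← hff, f1, f2]



section Eval

variable [Fintype σ]

lemma coeff_h4h1 {d : σ →₀ ℕ} (h5 : dg d = 5) :
    coeff d (hsymm σ ℤ 4 * hsymm σ ℤ 1) = (st d : ℤ) := by
  rw [coeff_mul]
  simp_rw [coeff_hsymm]
  rw [peel d (fun u => if dg u = 4 then (1:ℤ) else 0)]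
  rw [Finset.sum_congr rfl (fun i hi => if_pos (by rw [dg_sub_single hi]; omega))]
  rw [Finset.sum_const, nsmul_eq_mul, mul_one]
  rfl

lemma coeff_h3h2 {d : σ →₀ ℕ} (h5 : dg d = 5) :
    coeff d (hsymm σ ℤ 3 * hsymm σ ℤ 2) = (tt d : ℤ) + pr d := by
  rw [coeff_mul]
  simp_rw [coeff_hsymm]
  rw [forced d 3 2 h5, g2_eval]

lemma coeff_h2h2h1 {d : σ →₀ ℕ} (h5 : dg d = 5) :
    coeff d (hsymm σ ℤ 2 * hsymm σ ℤ 2 * hsymm σ ℤ 1)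
      = ∑ i ∈ d.support, ((tt (d - Finsupp.single i 1) : ℤ) + pr (d - Finsupp.single i 1)) := by
  rw [coeff_mul]
  simp_rw [coeff_hsymm]
  rw [peel d (fun u => coeff u (hsymm σ ℤ 2 * hsymm σ ℤ 2))]
  apply Finset.sum_congr rfl
  intro i hi
  rw [coeff_mul]
  simp_rw [coeff_hsymm]
  rw [forced _ 2 2 (by rw [dg_sub_single hi]; omega), g2_eval]

lemma coeff_h3h1h1 {d : σ →₀ ℕ} (h5 : dg d = 5) :
    coeff d (hsymm σ ℤ 3 * hsymm σ ℤ 1 * hsymm σ ℤ 1)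
      = ∑ i ∈ d.support, (st (d - Finsupp.single i 1) : ℤ) := by
  rw [coeff_mul]
  simp_rw [coeff_hsymm]
  rw [peel d (fun u => coeff u (hsymm σ ℤ 3 * hsymm σ ℤ 1))]
  apply Finset.sum_congr rfl
  intro i hi
  rw [coeff_mul]
  simp_rw [coeff_hsymm]
  rw [peel _ (fun u => if dg u = 3 then (1:ℤ) else 0)]
  rw [Finset.sum_congr rfl (fun j hj =>
    if_pos (by rw [dg_sub_single hj, dg_sub_single hi]; omega))]
  rw [Finset.sum_const, nsmul_eq_mul, mul_one]
  rfl

lemma coeff_hh_zero {d : σ →₀ ℕ} (a b : ℕ) (h : dg d ≠ a + b) :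
    coeff d (hsymm σ ℤ a * hsymm σ ℤ b) = 0 := by
  rw [coeff_mul]
  simp_rw [coeff_hsymm]
  exact vanish d a b h

lemma coeff_hhh_zero {d : σ →₀ ℕ} (a b c : ℕ) (h : dg d ≠ a + b + c) :
    coeff d (hsymm σ ℤ a * hsymm σ ℤ b * hsymm σ ℤ c) = 0 := by
  rw [coeff_mul]
  apply Finset.sum_eq_zero
  intro p hp
  rw [Finset.HasAntidiagonal.mem_antidiagonal] at hp
  by_cases h2 : dg p.2 = c
  · rw [coeff_hh_zero a b (by intro hc; apply h; rw [← hp, dg_add, hc, h2]), zero_mul]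
  · rw [coeff_hsymm, if_neg h2, mul_zero]

lemma sumA (d : σ →₀ ℕ) :
    2 * (∑ i ∈ d.support, ((tt (d - Finsupp.single i 1) : ℤ) + pr (d - Finsupp.single i 1)))
      = (st d : ℤ) * (2 * (tt d : ℤ) + ((st d : ℤ) * (st d : ℤ) - (st d : ℤ)))
        - 2 * (nn 2 d : ℤ) - (2 * (st d : ℤ) - 2) * (nn 1 d : ℤ) := by
  rw [Finset.mul_sum]
  have hpt : ∀ i ∈ d.support,
      2 * ((tt (d - Finsupp.single i 1) : ℤ) + pr (d - Finsupp.single i 1))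
        = (2 * (tt d : ℤ) + ((st d : ℤ) * (st d : ℤ) - (st d : ℤ)))
          - 2 * (if d i = 2 then (1:ℤ) else 0)
          - (2 * (st d : ℤ) - 2) * (if d i = 1 then (1:ℤ) else 0) := by
    intro i hi
    have e1 := two_mul_pr_int (d - Finsupp.single i 1)
    have e2 := tt_sub hi
    have e3 := st_sub hi
    calc 2 * ((tt (d - Finsupp.single i 1) : ℤ) + pr (d - Finsupp.single i 1))
        = 2 * (tt (d - Finsupp.single i 1) : ℤ)
            + (2 * pr (d - Finsupp.single i 1) : ℤ) := by push_cast; ring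
      _ = _ := by
          rw [e1, e2, e3]
          split_ifs <;> ring
  rw [Finset.sum_congr rfl hpt]
  rw [Finset.sum_sub_distrib, Finset.sum_sub_distrib, Finset.sum_const, nsmul_eq_mul,
    ← Finset.mul_sum, ← Finset.mul_sum, Finset.sum_boole, Finset.sum_boole]
  rfl

lemma sumD (d : σ →₀ ℕ) :
    (∑ i ∈ d.support, (st (d - Finsupp.single i 1) : ℤ))
      = (st d : ℤ) * (st d : ℤ) - (nn 1 d : ℤ) := by
  rw [Finset.sum_congr rfl (fun i hi => st_sub hi)]
  rw [Finset.sum_sub_distrib, Finset.sum_const, nsmul_eq_mul, Finset.sum_boole]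
  rfl

end Eval

lemma final_arith (a b m : ℕ) (hle : a + 2 * b + 3 * m ≤ 5) (hm : m = 0 → a + 2 * b = 5) :
    ((a : ℤ) + b + m) * (2 * ((b : ℤ) + m)
        + (((a : ℤ) + b + m) * ((a : ℤ) + b + m) - ((a : ℤ) + b + m)))
      - 2 * b - (2 * ((a : ℤ) + b + m) - 2) * a
      + 2 * ((a : ℤ) + b + m)
      - (2 * ((b : ℤ) + m) + (((a : ℤ) + b + m) * ((a : ℤ) + b + m) - ((a : ℤ) + b + m)))
      - 2 * (((a : ℤ) + b + m) * ((a : ℤ) + b + m) - a)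
    = 2 * ((if a = 1 ∧ b = 2 ∧ a + b + m = 1 + 2 then (1:ℤ) else 0)
        + 2 * (if a = 3 ∧ b = 1 ∧ a + b + m = 3 + 1 then (1:ℤ) else 0)
        + 5 * (if a = 5 ∧ b = 0 ∧ a + b + m = 5 + 0 then (1:ℤ) else 0)) := by
  have h1 : a ≤ 5 := by omega
  have h2 : b ≤ 2 := by omega
  have h3 : m ≤ 1 := by omega
  interval_cases a <;> interval_cases b <;> interval_cases m <;> simp_all

end Stmt15Aux

open Stmt15Aux

/-- The partition `(4,1)` of `5`. -/
def q41 : Nat.Partition 5 := Nat.Partition.ofSums 5 {4, 1} (by decide)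

/-- The partition `(3,2)` of `5`. -/
def q32 : Nat.Partition 5 := Nat.Partition.ofSums 5 {3, 2} (by decide)

/-- The partition `(3,1,1)` of `5`. -/
def q311 : Nat.Partition 5 := Nat.Partition.ofSums 5 {3, 1, 1} (by decide)

/-- The partition `(2,2,1)` of `5`. -/
def q221 : Nat.Partition 5 := Nat.Partition.ofSums 5 {2, 2, 1} (by decide)

/-- The partition `(2,1,1,1)` of `5`. -/
def q2111 : Nat.Partition 5 := Nat.Partition.ofSums 5 {2, 1, 1, 1} (by decide)

/-- The partition `(1,1,1,1,1)` of `5`. -/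
def q11111 : Nat.Partition 5 := Nat.Partition.ofSums 5 {1, 1, 1, 1, 1} (by decide)

theorem stmt_15 (N : ℕ) :
    hsymm (Fin N) ℤ 2 ^ 2 * hsymm (Fin N) ℤ 1 + hsymm (Fin N) ℤ 4 * hsymm (Fin N) ℤ 1 -
        hsymm (Fin N) ℤ 3 * hsymm (Fin N) ℤ 2 - hsymm (Fin N) ℤ 3 * hsymm (Fin N) ℤ 1 ^ 2 =
      msymm (Fin N) ℤ q221 + 2 * msymm (Fin N) ℤ q2111 + 5 * msymm (Fin N) ℤ q11111 := by
  classical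
  have eL : hsymm (Fin N) ℤ 2 ^ 2 * hsymm (Fin N) ℤ 1 + hsymm (Fin N) ℤ 4 * hsymm (Fin N) ℤ 1 -
      hsymm (Fin N) ℤ 3 * hsymm (Fin N) ℤ 2 - hsymm (Fin N) ℤ 3 * hsymm (Fin N) ℤ 1 ^ 2
    = hsymm (Fin N) ℤ 2 * hsymm (Fin N) ℤ 2 * hsymm (Fin N) ℤ 1
        + hsymm (Fin N) ℤ 4 * hsymm (Fin N) ℤ 1
        - hsymm (Fin N) ℤ 3 * hsymm (Fin N) ℤ 2
        - hsymm (Fin N) ℤ 3 * hsymm (Fin N) ℤ 1 * hsymm (Fin N) ℤ 1 := by ring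
  rw [eL]
  have h221 : q221.parts = Multiset.replicate 1 1 + Multiset.replicate 2 2 := by decide
  have h2111 : q2111.parts = Multiset.replicate 3 1 + Multiset.replicate 1 2 := by decide
  have h11111 : q11111.parts = Multiset.replicate 5 1 + Multiset.replicate 0 2 := by decide
  apply MvPolynomial.ext
  intro d
  rw [show (2 : MvPolynomial (Fin N) ℤ) = C 2 from (map_ofNat C 2).symm,
    show (5 : MvPolynomial (Fin N) ℤ) = C 5 from (map_ofNat C 5).symm]
  rw [coeff_sub, coeff_sub, coeff_add, coeff_add, coeff_add, coeff_C_mul, coeff_C_mul]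
  rw [coeff_msymm, coeff_msymm, coeff_msymm, h221, h2111, h11111]
  by_cases hdg : dg d = 5
  · rw [coeff_h2h2h1 hdg, coeff_h4h1 hdg, coeff_h3h2 hdg, coeff_h3h1h1 hdg]
    simp only [char_iff]
    obtain ⟨hst, htt, hle, hm0⟩ := class_split d
    rw [hdg] at hle hm0
    apply mul_left_cancel₀ (by norm_num : (2:ℤ) ≠ 0)
    have e2C : (2:ℤ) * ((tt d : ℤ) + pr d)
        = 2 * (tt d : ℤ) + ((st d : ℤ) * (st d : ℤ) - (st d : ℤ)) := by
      have := two_mul_pr_int d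
      push_cast at this ⊢
      linarith
    calc 2 * ((∑ i ∈ d.support, ((tt (d - Finsupp.single i 1) : ℤ)
            + pr (d - Finsupp.single i 1)))
          + (st d : ℤ) - ((tt d : ℤ) + pr d)
          - ∑ i ∈ d.support, (st (d - Finsupp.single i 1) : ℤ))
        = 2 * (∑ i ∈ d.support, ((tt (d - Finsupp.single i 1) : ℤ)
            + pr (d - Finsupp.single i 1)))
          + 2 * (st d : ℤ) - 2 * ((tt d : ℤ) + pr d)
          - 2 * ∑ i ∈ d.support, (st (d - Finsupp.single i 1) : ℤ) := by ring
      _ = ((st d : ℤ) * (2 * (tt d : ℤ) + ((st d : ℤ) * (st d : ℤ) - (st d : ℤ)))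
            - 2 * (nn 2 d : ℤ) - (2 * (st d : ℤ) - 2) * (nn 1 d : ℤ))
          + 2 * (st d : ℤ)
          - (2 * (tt d : ℤ) + ((st d : ℤ) * (st d : ℤ) - (st d : ℤ)))
          - 2 * ((st d : ℤ) * (st d : ℤ) - (nn 1 d : ℤ)) := by
          rw [sumA, sumD, e2C]
      _ = 2 * ((if nn 1 d = 1 ∧ nn 2 d = 2 ∧ st d = 1 + 2 then (1:ℤ) else 0)
            + 2 * (if nn 1 d = 3 ∧ nn 2 d = 1 ∧ st d = 3 + 1 then (1:ℤ) else 0)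
            + 5 * (if nn 1 d = 5 ∧ nn 2 d = 0 ∧ st d = 5 + 0 then (1:ℤ) else 0)) := by
          rw [hst, htt]
          push_cast
          linear_combination final_arith (nn 1 d) (nn 2 d) (mm d) hle (fun h => (hm0 h).symm)
  · rw [coeff_hhh_zero 2 2 1 (by omega), coeff_hh_zero 4 1 (by omega),
      coeff_hh_zero 3 2 (by omega), coeff_hhh_zero 3 1 1 (by omega)]
    rw [if_neg (fun h => hdg (by rw [← shp_sum d, h]; rfl)),
      if_neg (fun h => hdg (by rw [← shp_sum d, h]; rfl)),
      if_neg (fun h => hdg (by rw [← shp_sum d, h]; rfl))]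
    norm_num
end

section
/- In ℤ[x_1,…,x_N] for any number of variables N, the identity h_2·h_1^3 − h_5 + h_4·h_1 + 2·h_3·h_2 − h_3·h_1^2 − 2·h_2^2·h_1 = m_{(2,1,1,1)} + 4·m_{(1,1,1,1,1)} holds. (This is the paper's Row 6 result for S_5: χ^{(2,1,1,1)} = φ^{(2,1,1,1)} − φ^{(5)} + φ^{(4,1)} + 2φ^{(3,2)} − φ^{(3,1,1)} − 2φ^{(2,2,1)} together with the Kostka column for (2,1,1,1).) -/
open MvPolynomial

namespace Stmt16Aux

variable {σ τ : Type*} [DecidableEq σ] [DecidableEq τ]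
variable [Fintype σ] [Fintype τ]

/-- The count of ways to decompose a finsupp into an ordered list of finsupps of prescribed
degrees. -/
noncomputable def cnt : List ℕ → (σ →₀ ℕ) → ℤ
  | [], d => if d = 0 then 1 else 0
  | a :: L, d =>
      ∑ p ∈ Finset.HasAntidiagonal.antidiagonal d,
        if Multiset.card (Finsupp.toMultiset p.1) = a then cnt L p.2 else 0

/-- The multiset of nonzero values of a finsupp. -/
def shape (d : σ →₀ ℕ) : Multiset ℕ := d.support.val.map d

theorem prod_map_X (m : Multiset σ) :
    (m.map (X : σ → MvPolynomial σ ℤ)).prod = monomial (Multiset.toFinsupp m) 1 := by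
  induction m using Multiset.induction with
  | empty => simp
  | cons a s ih =>
      rw [Multiset.map_cons, Multiset.prod_cons, ih, X, monomial_mul, one_mul]
      congr 1
      rw [← Multiset.singleton_add, map_add, Multiset.toFinsupp_singleton]

theorem hsymm_eq (n : ℕ) :
    hsymm σ ℤ n = ∑ s : Sym σ n, monomial (Multiset.toFinsupp s.1) 1 := by
  rw [hsymm]
  exact Finset.sum_congr rfl fun s _ => prod_map_X s.1

theorem coeff_hsymm (n : ℕ) (d : σ →₀ ℕ) :
    coeff d (hsymm σ ℤ n) = if Multiset.card (Finsupp.toMultiset d) = n then 1 else 0 := by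
  rw [hsymm_eq, coeff_sum]
  simp only [coeff_monomial]
  split_ifs with h
  · have hz : ∀ s : Sym σ n, s ≠ ⟨Finsupp.toMultiset d, h⟩ →
        (if Multiset.toFinsupp s.1 = d then (1 : ℤ) else 0) = 0 := by
      intro s hs
      rw [if_neg]
      intro hsd
      apply hs
      apply Subtype.ext
      simpa using congrArg Finsupp.toMultiset hsd
    rw [Fintype.sum_eq_single _ hz]
    simp
  · apply Finset.sum_eq_zero
    intro s _
    rw [if_neg]
    intro hsd
    apply h
    have : Finsupp.toMultiset d = s.1 := by
      simpa using (congrArg Finsupp.toMultiset hsd).symm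
    rw [this]
    exact s.2

theorem ofSym_toMultiset {n : ℕ} (d : σ →₀ ℕ) (h : Multiset.card (Finsupp.toMultiset d) = n) :
    (Nat.Partition.ofSym (⟨Finsupp.toMultiset d, h⟩ : Sym σ n)).parts = shape d := by
  show (Finsupp.toMultiset d).dedup.map (Finsupp.toMultiset d).count = shape d
  have hd : (Finsupp.toMultiset d).dedup = d.support.val := by
    rw [← Finsupp.toFinset_toMultiset]
    rfl
  rw [hd, shape]
  exact Multiset.map_congr rfl fun a _ => Finsupp.count_toMultiset d a

theorem msymm_eq {n : ℕ} (μ : n.Partition) :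
    msymm σ ℤ μ = ∑ s : {a : Sym σ n // Nat.Partition.ofSym a = μ},
      monomial (Multiset.toFinsupp s.1.1) 1 := by
  rw [msymm]
  exact Finset.sum_congr rfl fun s _ => prod_map_X _

theorem coeff_msymm {n : ℕ} (μ : n.Partition) (d : σ →₀ ℕ) :
    coeff d (msymm σ ℤ μ) =
      if Multiset.card (Finsupp.toMultiset d) = n ∧ shape d = μ.parts then 1 else 0 := by
  rw [msymm_eq, coeff_sum]
  simp only [coeff_monomial]
  split_ifs with h
  · obtain ⟨h1, h2⟩ := h
    have hof : Nat.Partition.ofSym (⟨Finsupp.toMultiset d, h1⟩ : Sym σ n) = μ := by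
      ext1
      rw [ofSym_toMultiset d h1, h2]
    have hz : ∀ s : {a : Sym σ n // Nat.Partition.ofSym a = μ},
        s ≠ ⟨⟨Finsupp.toMultiset d, h1⟩, hof⟩ →
        (if Multiset.toFinsupp s.1.1 = d then (1 : ℤ) else 0) = 0 := by
      intro s hs
      rw [if_neg]
      intro hsd
      apply hs
      apply Subtype.ext
      apply Subtype.ext
      simpa using congrArg Finsupp.toMultiset hsd
    rw [Fintype.sum_eq_single _ hz]
    simp
  · apply Finset.sum_eq_zero
    intro s _
    rw [if_neg]
    intro hsd
    apply h
    have hms : s.1.1 = Finsupp.toMultiset d := by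
      simpa using congrArg Finsupp.toMultiset hsd
    have hcard : Multiset.card (Finsupp.toMultiset d) = n := by rw [← hms]; exact s.1.2
    constructor
    · exact hcard
    · have h5 : (⟨Finsupp.toMultiset d, hcard⟩ : Sym σ n) = s.1 := Subtype.ext hms.symm
      calc shape d = (Nat.Partition.ofSym (⟨Finsupp.toMultiset d, hcard⟩ : Sym σ n)).parts :=
            (ofSym_toMultiset d _).symm
        _ = μ.parts := by rw [h5, s.2]


theorem coeff_hprod (L : List ℕ) (d : σ →₀ ℕ) :
    coeff d ((L.map (hsymm σ ℤ)).prod) = cnt L d := by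
  induction L generalizing d with
  | nil => simp [cnt, coeff_one, eq_comm]
  | cons a L ih =>
      rw [List.map_cons, List.prod_cons, coeff_mul, cnt]
      refine Finset.sum_congr rfl fun p _ => ?_
      rw [coeff_hsymm, ih]
      split_ifs <;> simp

theorem deg_add (u v : σ →₀ ℕ) :
    Multiset.card (Finsupp.toMultiset (u + v)) =
      Multiset.card (Finsupp.toMultiset u) + Multiset.card (Finsupp.toMultiset v) := by
  rw [map_add, Multiset.card_add]

theorem cnt_of_deg_ne (L : List ℕ) (d : σ →₀ ℕ)
    (h : Multiset.card (Finsupp.toMultiset d) ≠ L.sum) : cnt L d = 0 := by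
  induction L generalizing d with
  | nil =>
      rw [cnt, if_neg]
      rintro rfl
      simp at h
  | cons a L ih =>
      rw [cnt]
      apply Finset.sum_eq_zero
      intro p hp
      rw [Finset.HasAntidiagonal.mem_antidiagonal] at hp
      split_ifs with h1
      · apply ih
        intro h2
        apply h
        rw [← hp, deg_add, h1, h2, List.sum_cons]
      · rfl

section Transport

variable {f : σ → τ} (hf : Function.Injective f)
include hf

theorem deg_mapDomain (d : σ →₀ ℕ) :
    Multiset.card (Finsupp.toMultiset (Finsupp.mapDomain f d)) =
      Multiset.card (Finsupp.toMultiset d) := by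
  rw [← Finsupp.toMultiset_map, Multiset.card_map]

theorem shape_mapDomain (d : σ →₀ ℕ) : shape (Finsupp.mapDomain f d) = shape d := by
  rw [shape, shape, Finsupp.mapDomain_support_of_injective hf,
    Finset.image_val_of_injOn hf.injOn, Multiset.map_map]
  exact Multiset.map_congr rfl fun a _ => Finsupp.mapDomain_apply hf d a

theorem cnt_mapDomain (L : List ℕ) (d : σ →₀ ℕ) :
    cnt L (Finsupp.mapDomain f d) = cnt L d := by
  induction L generalizing d with
  | nil =>
      rw [cnt, cnt]
      congr 1
      simp only [eq_iff_iff]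
      constructor
      · intro h
        apply Finsupp.mapDomain_injective hf
        rw [h, Finsupp.mapDomain_zero]
      · rintro rfl
        exact Finsupp.mapDomain_zero
  | cons a L ih =>
      rw [cnt, cnt]
      symm
      refine Finset.sum_nbij' (fun p => (Finsupp.mapDomain f p.1, Finsupp.mapDomain f p.2))
        (fun p => (Finsupp.comapDomain f p.1 hf.injOn, Finsupp.comapDomain f p.2 hf.injOn))
        ?_ ?_ ?_ ?_ ?_
      · intro p hp
        rw [Finset.HasAntidiagonal.mem_antidiagonal] at hp ⊢
        rw [← Finsupp.mapDomain_add, hp]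
      · intro p hp
        rw [Finset.HasAntidiagonal.mem_antidiagonal] at hp ⊢
        rw [← Finsupp.comapDomain_add_of_injective hf, hp]
        ext a
        rw [Finsupp.comapDomain_apply, Finsupp.mapDomain_apply hf]
      · intro p _
        ext a <;>
          simp only [Finsupp.comapDomain_apply, Finsupp.mapDomain_apply hf]
      · intro p hp
        rw [Finset.HasAntidiagonal.mem_antidiagonal] at hp
        have h1 : ↑(p.1.support) ⊆ Set.range f := by
          intro x hx
          have hx1 : x ∈ (Finsupp.mapDomain f d).support := by
            have hx' := Finsupp.mem_support_iff.mp (Finset.mem_coe.mp hx)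
            rw [Finsupp.mem_support_iff, ← hp]
            simp only [Finsupp.coe_add, Pi.add_apply]
            omega
          rw [Finsupp.mapDomain_support_of_injective hf, Finset.mem_image] at hx1
          obtain ⟨y, _, rfl⟩ := hx1
          exact Set.mem_range_self y
        have h2 : ↑(p.2.support) ⊆ Set.range f := by
          intro x hx
          have hx1 : x ∈ (Finsupp.mapDomain f d).support := by
            have hx' := Finsupp.mem_support_iff.mp (Finset.mem_coe.mp hx)
            rw [Finsupp.mem_support_iff, ← hp]
            simp only [Finsupp.coe_add, Pi.add_apply]
            omega
          rw [Finsupp.mapDomain_support_of_injective hf, Finset.mem_image] at hx1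
          obtain ⟨y, _, rfl⟩ := hx1
          exact Set.mem_range_self y
        ext : 1 <;> [exact Finsupp.mapDomain_comapDomain f hf _ h1;
          exact Finsupp.mapDomain_comapDomain f hf _ h2]
      · intro p _
        rw [deg_mapDomain hf, ih]

end Transport

/-- The combined counting statement, per exponent vector. -/
def G (d : σ →₀ ℕ) : Prop :=
  cnt [2,1,1,1] d - cnt [5] d + cnt [4,1] d + 2 * cnt [3,2] d
      - cnt [3,1,1] d - 2 * cnt [2,2,1] d
    = (if Multiset.card (Finsupp.toMultiset d) = 5 ∧ shape d = {2,1,1,1} then 1 else 0)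
      + 4 * (if Multiset.card (Finsupp.toMultiset d) = 5 ∧ shape d = {1,1,1,1,1} then 1 else 0)

noncomputable instance (d : σ →₀ ℕ) : Decidable (G d) := by unfold G; infer_instance

theorem G_mapDomain {f : σ → τ} (hf : Function.Injective f) (d : σ →₀ ℕ) :
    G (Finsupp.mapDomain f d) ↔ G d := by
  unfold G
  rw [cnt_mapDomain hf, cnt_mapDomain hf, cnt_mapDomain hf, cnt_mapDomain hf,
    cnt_mapDomain hf, cnt_mapDomain hf, deg_mapDomain hf, shape_mapDomain hf]

theorem G_of_deg_ne (d : σ →₀ ℕ) (h : Multiset.card (Finsupp.toMultiset d) ≠ 5) : G d := by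
  unfold G
  rw [cnt_of_deg_ne _ _ (by simpa using h), cnt_of_deg_ne _ _ (by simpa using h),
    cnt_of_deg_ne _ _ (by simpa using h), cnt_of_deg_ne _ _ (by simpa using h),
    cnt_of_deg_ne _ _ (by simpa using h), cnt_of_deg_ne _ _ (by simpa using h),
    if_neg (by tauto), if_neg (by tauto)]
  ring

set_option maxRecDepth 1000000 in
set_option maxHeartbeats 4000000 in
theorem Gfin1 : ∀ r : Sym (Fin 1) 4, G (Multiset.toFinsupp (Finset.univ.val + r.1)) := by decide
set_option maxRecDepth 1000000 in
set_option maxHeartbeats 4000000 in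
theorem Gfin2 : ∀ r : Sym (Fin 2) 3, G (Multiset.toFinsupp (Finset.univ.val + r.1)) := by decide
set_option maxRecDepth 1000000 in
set_option maxHeartbeats 4000000 in
theorem Gfin3 : ∀ r : Sym (Fin 3) 2, G (Multiset.toFinsupp (Finset.univ.val + r.1)) := by decide
set_option maxRecDepth 1000000 in
set_option maxHeartbeats 4000000 in
theorem Gfin4 : ∀ r : Sym (Fin 4) 1, G (Multiset.toFinsupp (Finset.univ.val + r.1)) := by decide
set_option maxRecDepth 1000000 in
set_option maxHeartbeats 4000000 in
theorem Gfin5 : ∀ r : Sym (Fin 5) 0, G (Multiset.toFinsupp (Finset.univ.val + r.1)) := by decide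

theorem G_univ_core {k : ℕ} (d : Fin k →₀ ℕ)
    (huniv : d.support = Finset.univ)
    (hdeg : Multiset.card (Finsupp.toMultiset d) = 5)
    (key : ∀ r : Sym (Fin k) (5 - k), G (Multiset.toFinsupp (Finset.univ.val + r.1))) :
    G d := by
  have hle : (Finset.univ.val : Multiset (Fin k)) ≤ Finsupp.toMultiset d := by
    rw [Multiset.le_iff_count]
    intro i
    rw [Finsupp.count_toMultiset]
    have hi : i ∈ d.support := by rw [huniv]; exact Finset.mem_univ i
    have h1 := Finsupp.mem_support_iff.mp hi
    have h2 : Multiset.count i (Finset.univ.val : Multiset (Fin k)) ≤ 1 :=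
      Multiset.nodup_iff_count_le_one.mp Finset.univ.nodup i
    omega
  obtain ⟨r, hr⟩ := Multiset.le_iff_exists_add.mp hle
  have hcardu : Multiset.card (Finset.univ.val : Multiset (Fin k)) = k := by
    simpa using congrArg Finset.card (rfl : (Finset.univ : Finset (Fin k)) = Finset.univ)
  have hcard : Multiset.card r = 5 - k := by
    have h1 := congrArg Multiset.card hr
    rw [hdeg, Multiset.card_add, hcardu] at h1
    omega
  have hG := key ⟨r, hcard⟩
  have hd : Multiset.toFinsupp (Finset.univ.val + r) = d := by
    rw [← hr, Finsupp.toMultiset_toFinsupp]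
  rwa [hd] at hG

theorem card_support_le_deg (d : σ →₀ ℕ) :
    d.support.card ≤ Multiset.card (Finsupp.toMultiset d) := by
  rw [Finsupp.card_toMultiset]
  have h1 : d.support.card = ∑ _a ∈ d.support, 1 := by simp
  rw [h1, Finsupp.sum]
  exact Finset.sum_le_sum fun a ha =>
    Nat.one_le_iff_ne_zero.mpr (Finsupp.mem_support_iff.mp ha)

theorem G_all (d : σ →₀ ℕ) : G d := by
  by_cases h5 : Multiset.card (Finsupp.toMultiset d) = 5
  swap
  · exact G_of_deg_ne d h5
  · classical
    set S := d.support with hS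
    let d₀ : {x // x ∈ S} →₀ ℕ := Finsupp.subtypeDomain (· ∈ S) d
    have hsub : Finsupp.mapDomain (Subtype.val : {x // x ∈ S} → σ) d₀ = d := by
      ext a
      by_cases ha : a ∈ S
      · rw [show a = ((⟨a, ha⟩ : {x // x ∈ S}) : σ) from rfl,
          Finsupp.mapDomain_apply Subtype.val_injective]
        rfl
      · have h2 : d a = 0 := Finsupp.notMem_support_iff.mp ha
        rw [h2, ← Finsupp.notMem_support_iff,
          Finsupp.mapDomain_support_of_injective Subtype.val_injective]
        intro hmem
        rw [Finset.mem_image] at hmem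
        obtain ⟨y, _, rfl⟩ := hmem
        exact ha y.2
    have hsupp₀ : d₀.support = Finset.univ := by
      ext x
      simp only [Finset.mem_univ, iff_true, Finsupp.mem_support_iff]
      have : d₀ x = d x.1 := rfl
      rw [this]
      exact Finsupp.mem_support_iff.mp x.2
    let e := Fintype.equivFin {x // x ∈ S}
    set k := Fintype.card {x // x ∈ S} with hk
    let d'' : Fin k →₀ ℕ := Finsupp.mapDomain e d₀
    have hG0 : G d₀ → G d := by
      intro h
      rw [← hsub]
      exact (G_mapDomain Subtype.val_injective d₀).mpr h
    have hG1 : G d'' → G d₀ := fun h => (G_mapDomain e.injective d₀).mp h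
    have hdeg₀ : Multiset.card (Finsupp.toMultiset d₀) = 5 := by
      rw [← hsub] at h5
      rwa [deg_mapDomain Subtype.val_injective] at h5
    have hdeg'' : Multiset.card (Finsupp.toMultiset d'') = 5 := by
      rw [show d'' = Finsupp.mapDomain e d₀ from rfl, deg_mapDomain e.injective]
      exact hdeg₀
    have hsupp'' : d''.support = Finset.univ := by
      rw [show d'' = Finsupp.mapDomain e d₀ from rfl,
        Finsupp.mapDomain_support_of_injective e.injective, hsupp₀]
      exact Finset.image_univ_equiv e
    have hk5 : k ≤ 5 := by
      rw [hk, Fintype.card_coe]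
      calc S.card ≤ Multiset.card (Finsupp.toMultiset d) := card_support_le_deg d
        _ = 5 := h5
    apply hG0
    apply hG1
    apply G_univ_core d'' hsupp'' hdeg''
    interval_cases k
    · intro r; exact absurd r.2 (by simp [Multiset.eq_zero_of_forall_notMem])
    · exact Gfin1
    · exact Gfin2
    · exact Gfin3
    · exact Gfin4
    · exact Gfin5

end Stmt16Aux


open MvPolynomial



theorem stmt_16 (N : ℕ) :
    hsymm (Fin N) ℤ 2 * hsymm (Fin N) ℤ 1 ^ 3 - hsymm (Fin N) ℤ 5 +
        hsymm (Fin N) ℤ 4 * hsymm (Fin N) ℤ 1 + 2 * (hsymm (Fin N) ℤ 3 * hsymm (Fin N) ℤ 2) -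
        hsymm (Fin N) ℤ 3 * hsymm (Fin N) ℤ 1 ^ 2 -
        2 * (hsymm (Fin N) ℤ 2 ^ 2 * hsymm (Fin N) ℤ 1) =
      msymm (Fin N) ℤ q2111 + 4 * msymm (Fin N) ℤ q11111 := by
  have hq1 : q2111.parts = ({2,1,1,1} : Multiset ℕ) := by decide
  have hq2 : q11111.parts = ({1,1,1,1,1} : Multiset ℕ) := by decide
  have e1 : hsymm (Fin N) ℤ 2 * hsymm (Fin N) ℤ 1 ^ 3
      = (([2,1,1,1] : List ℕ).map (hsymm (Fin N) ℤ)).prod := by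
    simp only [List.map_cons, List.map_nil, List.prod_cons, List.prod_nil]
    ring
  have e2 : hsymm (Fin N) ℤ 5 = (([5] : List ℕ).map (hsymm (Fin N) ℤ)).prod := by
    simp only [List.map_cons, List.map_nil, List.prod_cons, List.prod_nil]
    ring
  have e3 : hsymm (Fin N) ℤ 4 * hsymm (Fin N) ℤ 1
      = (([4,1] : List ℕ).map (hsymm (Fin N) ℤ)).prod := by
    simp only [List.map_cons, List.map_nil, List.prod_cons, List.prod_nil]
    ring
  have e4 : hsymm (Fin N) ℤ 3 * hsymm (Fin N) ℤ 2
      = (([3,2] : List ℕ).map (hsymm (Fin N) ℤ)).prod := by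
    simp only [List.map_cons, List.map_nil, List.prod_cons, List.prod_nil]
    ring
  have e5 : hsymm (Fin N) ℤ 3 * hsymm (Fin N) ℤ 1 ^ 2
      = (([3,1,1] : List ℕ).map (hsymm (Fin N) ℤ)).prod := by
    simp only [List.map_cons, List.map_nil, List.prod_cons, List.prod_nil]
    ring
  have e6 : hsymm (Fin N) ℤ 2 ^ 2 * hsymm (Fin N) ℤ 1
      = (([2,2,1] : List ℕ).map (hsymm (Fin N) ℤ)).prod := by
    simp only [List.map_cons, List.map_nil, List.prod_cons, List.prod_nil]
    ring
  have h2C : (2 : MvPolynomial (Fin N) ℤ) = MvPolynomial.C 2 := (map_ofNat MvPolynomial.C 2).symm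
  have h4C : (4 : MvPolynomial (Fin N) ℤ) = MvPolynomial.C 4 := (map_ofNat MvPolynomial.C 4).symm
  apply MvPolynomial.ext
  intro d
  have hG := Stmt16Aux.G_all (σ := Fin N) d
  unfold Stmt16Aux.G at hG
  rw [e1, e2, e3, e4, e5, e6, h2C, h4C]
  simp only [coeff_sub, coeff_add, MvPolynomial.coeff_C_mul, Stmt16Aux.coeff_hprod,
    Stmt16Aux.coeff_msymm, hq1, hq2]
  exact hG
end
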